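/- arXiv:1903.05866 — 2 statements merged into one kernel-verified Lean document; each statement's English description precedes it below -/
import Mathlib

section
/- Let d ≥ 2 and let x_i, x_j ∈ ℝ^d with x_i ≠ x_j. Let Q₁, Q₂, Q₃, Q₄ ∈ ℝ^d be nonzero vectors with unit directions η_k = Q_k/‖Q_k‖, and let Q ∈ ℝ^d be a nonzero vector parallel to x_i − x_j such that Q₁ + Q₃ = Q and Q₂ + Q₄ = −Q. Set η = (x_i − x_j)/‖x_i − x_j‖. Then for every continuously differentiable, compactly supported function φ : ℝ^d → ℝ, the vector-valued sum (∫_{[0,∞)} ⟪η₁, ∇φ(x_i + s η₁)⟫ ds) • Q₁ + (∫_{[0,∞)} ⟪η₃, ∇φ(x_i + s η₃)⟫ ds) • Q₃ + (∫_{[0,∞)} ⟪η₂, ∇φ(x_j + s η₂)⟫ ds) • Q₂ + (∫_{[0,∞)} ⟪η₄, ∇φ(x_j + s η₄)⟫ ds) • Q₄ + (∫_{[0,‖x_i−x_j‖]} ⟪η, ∇φ(x_j + s η)⟫ ds) • Q equals 0. (This expresses that the tensor T = S^{Q₁+} + S^{Q₂+} + S^{Q₃+} + S^{Q₄+} + Q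 ⊗ η δ_C associated with a binary collision, where the fifth term is the 'colliton' supported on the segment C = [x_j, x_i], is divergence-free.) -/
open scoped RealInnerProductSpace
open MeasureTheory Set


variable {d : ℕ}

lemma line_deriv (φ : EuclideanSpace ℝ (Fin d) → ℝ) (hφ : ContDiff ℝ 1 φ)
    (x η : EuclideanSpace ℝ (Fin d)) (s : ℝ) :
    HasDerivAt (fun t : ℝ => φ (x + t • η)) ⟪η, gradient φ (x + s • η)⟫ s := by
  have hdiff : DifferentiableAt ℝ φ (x + s • η) := (hφ.differentiable one_ne_zero) _
  have hline : HasDerivAt (fun t : ℝ => x + t • η) η s := by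
    simpa using ((hasDerivAt_id s).smul_const η).const_add x
  have hgrad := hdiff.hasGradientAt
  rw [hasGradientAt_iff_hasFDerivAt] at hgrad
  have := hgrad.comp_hasDerivAt s hline
  have := (show HasDerivAt (fun t : ℝ => φ (x + t • η))
    ((InnerProductSpace.toDual ℝ (EuclideanSpace ℝ (Fin d))) (gradient φ (x + s • η)) η) s from this)
  simpa [InnerProductSpace.toDual_apply_apply, Function.comp, real_inner_comm] using this

lemma cont_integrand (φ : EuclideanSpace ℝ (Fin d) → ℝ) (hφ : ContDiff ℝ 1 φ)
    (x η : EuclideanSpace ℝ (Fin d)) :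
    Continuous (fun s : ℝ => ⟪η, gradient φ (x + s • η)⟫) := by
  have hgc : Continuous (gradient φ) := by
    have h1 : Continuous (fderiv ℝ φ) := hφ.continuous_fderiv one_ne_zero
    have : Continuous fun y => (InnerProductSpace.toDual ℝ (EuclideanSpace ℝ (Fin d))).symm
        (fderiv ℝ φ y) := (InnerProductSpace.toDual ℝ _).symm.continuous.comp h1
    exact this
  exact continuous_const.inner (hgc.comp (continuous_const.add (continuous_id.smul continuous_const)))

lemma support_integrand (φ : EuclideanSpace ℝ (Fin d) → ℝ)
    (x η : EuclideanSpace ℝ (Fin d)) (hη : ‖η‖ = 1) (R : ℝ)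
    (hR : tsupport φ ⊆ Metric.closedBall 0 R) (s : ℝ) (hs : R + ‖x‖ < |s|) :
    ⟪η, gradient φ (x + s • η)⟫ = 0 := by
  have hout : x + s • η ∉ tsupport φ := by
    intro h
    have := hR h
    simp only [Metric.mem_closedBall, dist_zero_right] at this
    have h1 : ‖s • η‖ = |s| := by
      simp [norm_smul, hη]
    have h2 : ‖s • η‖ ≤ ‖x + s • η‖ + ‖x‖ := by
      have h3 := norm_sub_le (x + s • η) x
      rwa [add_sub_cancel_left] at h3
    linarith
  have : gradient φ (x + s • η) = 0 := by
    have hf : fderiv ℝ φ (x + s • η) = 0 := by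
      by_contra hne
      exact hout (support_fderiv_subset ℝ (Function.mem_support.mpr hne))
    unfold gradient
    rw [hf]; simp
  rw [this]; simp

lemma phi_far (φ : EuclideanSpace ℝ (Fin d) → ℝ)
    (x η : EuclideanSpace ℝ (Fin d)) (hη : ‖η‖ = 1) (R : ℝ)
    (hR : tsupport φ ⊆ Metric.closedBall 0 R) (s : ℝ) (hs : R + ‖x‖ < |s|) :
    φ (x + s • η) = 0 := by
  apply image_eq_zero_of_notMem_tsupport
  intro h
  have := hR h
  simp only [Metric.mem_closedBall, dist_zero_right] at this
  have h1 : ‖s • η‖ = |s| := by simp [norm_smul, hη]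
  have h2 : ‖s • η‖ ≤ ‖x + s • η‖ + ‖x‖ := by
    have h3 := norm_sub_le (x + s • η) x
    rwa [add_sub_cancel_left] at h3
  linarith

lemma halfline (φ : EuclideanSpace ℝ (Fin d) → ℝ) (hφ : ContDiff ℝ 1 φ)
    (hφc : HasCompactSupport φ) (x η : EuclideanSpace ℝ (Fin d)) (hη : ‖η‖ = 1) :
    ∫ s in Set.Ici (0 : ℝ), ⟪η, gradient φ (x + s • η)⟫ = -φ x := by
  obtain ⟨R, hR⟩ := hφc.isCompact.isBounded.subset_closedBall 0
  set g' : ℝ → ℝ := fun s => ⟪η, gradient φ (x + s • η)⟫ with hg'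
  have hcs : HasCompactSupport g' := by
    apply HasCompactSupport.intro (isCompact_Icc (a := -(R + ‖x‖ + 1)) (b := R + ‖x‖ + 1))
    intro s hs
    apply support_integrand φ x η hη R hR
    simp only [Set.mem_Icc, not_and_or, not_le] at hs
    rcases hs with h | h
    · calc R + ‖x‖ < -s := by linarith
        _ ≤ |s| := by rw [abs_eq_max_neg]; exact le_max_right _ _
    · calc R + ‖x‖ < s := by linarith
        _ ≤ |s| := le_abs_self s
  have hint : MeasureTheory.IntegrableOn g' (Set.Ioi (0:ℝ)) :=
    ((cont_integrand φ hφ x η).integrable_of_hasCompactSupport hcs).integrableOn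
  have htend : Filter.Tendsto (fun s : ℝ => φ (x + s • η)) Filter.atTop (nhds 0) := by
    apply Filter.Tendsto.congr' _ tendsto_const_nhds
    filter_upwards [Filter.eventually_gt_atTop (R + ‖x‖)] with s hs
    exact (phi_far φ x η hη R hR s (hs.trans_le (le_abs_self s))).symm
  have key := MeasureTheory.integral_Ioi_of_hasDerivAt_of_tendsto'
    (f := fun s : ℝ => φ (x + s • η)) (f' := g') (a := (0:ℝ))
    (fun s _ => line_deriv φ hφ x η s) hint htend
  rw [MeasureTheory.integral_Ici_eq_integral_Ioi, key]
  simp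

lemma segment_int (φ : EuclideanSpace ℝ (Fin d) → ℝ) (hφ : ContDiff ℝ 1 φ)
    (x η : EuclideanSpace ℝ (Fin d)) (L : ℝ) (hL : 0 ≤ L) :
    ∫ s in Set.Icc (0 : ℝ) L, ⟪η, gradient φ (x + s • η)⟫ = φ (x + L • η) - φ x := by
  rw [MeasureTheory.integral_Icc_eq_integral_Ioc, ← intervalIntegral.integral_of_le hL]
  have := intervalIntegral.integral_eq_sub_of_hasDerivAt
    (f := fun s : ℝ => φ (x + s • η)) (f' := fun s => ⟪η, gradient φ (x + s • η)⟫)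
    (a := 0) (b := L) (fun s _ => line_deriv φ hφ x η s)
    ((cont_integrand φ hφ x η).intervalIntegrable 0 L)
  rw [this]
  simp


/-- The tensor `T = S^{Q₁+} + S^{Q₂+} + S^{Q₃+} + S^{Q₄+} + Q ⊗ η δ_C` associated with a
binary collision, where the half-lines of `Q₁, Q₃` emanate from `x_i`, those of `Q₂, Q₄`
from `x_j`, and the fifth term (the "colliton") is supported on the segment `C = [x_j, x_i]`
with direction `η = (x_i − x_j)/‖x_i − x_j‖`, is divergence-free: paired with a test
function `φ`, its row-wise divergence vanishes, provided `Q ∥ x_i − x_j`, `Q₁ + Q₃ = Q`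
and `Q₂ + Q₄ = −Q`. -/
theorem stmt3 (d : ℕ) (hd : 2 ≤ d) (xi xj : EuclideanSpace ℝ (Fin d)) (hx : xi ≠ xj)
    (Q₁ Q₂ Q₃ Q₄ Q : EuclideanSpace ℝ (Fin d))
    (hQ₁ : Q₁ ≠ 0) (hQ₂ : Q₂ ≠ 0) (hQ₃ : Q₃ ≠ 0) (hQ₄ : Q₄ ≠ 0) (hQ : Q ≠ 0)
    (hpar : ∃ c : ℝ, Q = c • (xi - xj))
    (h13 : Q₁ + Q₃ = Q) (h24 : Q₂ + Q₄ = -Q)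
    (φ : EuclideanSpace ℝ (Fin d) → ℝ) (hφ : ContDiff ℝ 1 φ) (hφc : HasCompactSupport φ) :
    (∫ s in Set.Ici (0 : ℝ),
        ⟪‖Q₁‖⁻¹ • Q₁, gradient φ (xi + s • (‖Q₁‖⁻¹ • Q₁))⟫) • Q₁ +
    (∫ s in Set.Ici (0 : ℝ),
        ⟪‖Q₃‖⁻¹ • Q₃, gradient φ (xi + s • (‖Q₃‖⁻¹ • Q₃))⟫) • Q₃ +
    (∫ s in Set.Ici (0 : ℝ),
        ⟪‖Q₂‖⁻¹ • Q₂, gradient φ (xj + s • (‖Q₂‖⁻¹ • Q₂))⟫) • Q₂ +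
    (∫ s in Set.Ici (0 : ℝ),
        ⟪‖Q₄‖⁻¹ • Q₄, gradient φ (xj + s • (‖Q₄‖⁻¹ • Q₄))⟫) • Q₄ +
    (∫ s in Set.Icc (0 : ℝ) ‖xi - xj‖,
        ⟪‖xi - xj‖⁻¹ • (xi - xj), gradient φ (xj + s • (‖xi - xj‖⁻¹ • (xi - xj)))⟫) • Q
      = 0 := by
  have hxx : xi - xj ≠ 0 := sub_ne_zero.mpr hx
  have hnorm : ‖xi - xj‖ ≠ 0 := norm_ne_zero_iff.mpr hxx
  have hu : ∀ v : EuclideanSpace ℝ (Fin d), v ≠ 0 → ‖‖v‖⁻¹ • v‖ = 1 := fun v hv => by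
    rw [norm_smul, norm_inv, norm_norm, inv_mul_cancel₀ (norm_ne_zero_iff.mpr hv)]
  rw [halfline φ hφ hφc xi _ (hu _ hQ₁),
      halfline φ hφ hφc xi _ (hu _ hQ₃),
      halfline φ hφ hφc xj _ (hu _ hQ₂),
      halfline φ hφ hφc xj _ (hu _ hQ₄),
      segment_int φ hφ xj _ _ (norm_nonneg _)]
  have hend : xj + ‖xi - xj‖ • (‖xi - xj‖⁻¹ • (xi - xj)) = xi := by
    rw [smul_smul, mul_inv_cancel₀ hnorm, one_smul]
    abel
  rw [hend]
  have hQ3 : Q₃ = Q - Q₁ := by rw [← h13]; abel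
  have hQ4 : Q₄ = -Q - Q₂ := by
    have : Q₄ = -Q - Q₂ := by rw [← h24]; abel
    exact this
  rw [hQ3, hQ4]
  module
end

section
/- Let v, v', v₁ be vectors in a real inner product space, and set V = (1, v), V' = (1, v'), V₁ = (1, v₁) in ℝ × E with inner product ⟪(s,a),(t,b)⟫ = st + ⟪a,b⟫. Then the 3 × 3 Gram determinant det(⟪V_i, V_j⟫) computed for the family (V, V', V₁) equals the 2 × 2 Gram determinant of (v' − v, v₁ − v) plus the 3 × 3 Gram determinant of (v, v', v₁). (In the notation of the paper: |V ∧ V' ∧ V₁|² = |(v' − v) ∧ (v₁ − v)|² + |v ∧ v' ∧ v₁|².) -/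
open scoped RealInnerProductSpace

/-- For `V = (1, v)`, `V' = (1, v')`, `V₁ = (1, v₁)` in `ℝ × E` with inner product
`⟪(s,a),(t,b)⟫ = st + ⟪a,b⟫` (so that `⟪V_i, V_j⟫ = 1 + ⟪v_i, v_j⟫`), the identity
`|V ∧ V' ∧ V₁|² = |(v' − v) ∧ (v₁ − v)|² + |v ∧ v' ∧ v₁|²`: the 3 × 3 Gram determinant of
`(V, V', V₁)` equals the 2 × 2 Gram determinant of `(v' − v, v₁ − v)` plus the 3 × 3 Gram
determinant of `(v, v', v₁)`. -/
theorem stmt11 {E : Type*} [NormedAddCommGroup E] [InnerProductSpace ℝ E] (v v' v₁ : E) :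
    (Matrix.det !![1 + ⟪v, v⟫, 1 + ⟪v, v'⟫, 1 + ⟪v, v₁⟫;
                   1 + ⟪v', v⟫, 1 + ⟪v', v'⟫, 1 + ⟪v', v₁⟫;
                   1 + ⟪v₁, v⟫, 1 + ⟪v₁, v'⟫, 1 + ⟪v₁, v₁⟫]) =
      (Matrix.det !![⟪v' - v, v' - v⟫, ⟪v' - v, v₁ - v⟫;
                     ⟪v₁ - v, v' - v⟫, ⟪v₁ - v, v₁ - v⟫]) +
      (Matrix.det !![⟪v, v⟫, ⟪v, v'⟫, ⟪v, v₁⟫;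
                     ⟪v', v⟫, ⟪v', v'⟫, ⟪v', v₁⟫;
                     ⟪v₁, v⟫, ⟪v₁, v'⟫, ⟪v₁, v₁⟫]) := by
  simp only [Matrix.det_fin_three, Matrix.det_fin_two, Matrix.cons_val', Matrix.cons_val_zero,
    Matrix.cons_val_one, Matrix.head_cons, Matrix.empty_val', Matrix.cons_val_fin_one,
    Matrix.head_fin_const, inner_sub_left, inner_sub_right, Matrix.of_apply, Matrix.cons_val_two, Matrix.tail_cons]
  rw [real_inner_comm v' v, real_inner_comm v₁ v, real_inner_comm v₁ v']
  ring
end
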